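/- arXiv:1108.1689 — 2 statements merged into one kernel-verified Lean document; each statement's English description precedes it below -/
import Mathlib

section
/- With g = -f⁻² as above and w* = 1/2, the absolute condition number κ_abs = 1/(|g''(w*)|·|w*|) equals 2 for every α > 0. -/
theorem preconditioned_condition_number (α : ℝ) (hα : 0 < α)
    (f g : ℝ → ℝ)
    (hf : ∀ w, f w = 2*α - w*α^2/(1+w*α) - (1-w)*α^2/(1+(1-w)*α))
    (hg : ∀ w, g w = -1/(f w)^2) :
    1 / (|deriv (deriv g) (1/2)| * |(1/2 : ℝ)|) = 2 := by
  have hαne : α ≠ 0 := ne_of_gt hα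
  have h2α : (0:ℝ) < 2 + α := by linarith
  have h2αne : (2:ℝ) + α ≠ 0 := ne_of_gt h2α
  set c : ℝ := (α*(2+α))^2 with hc
  have hcpos : 0 < c := by positivity
  have hcne : c ≠ 0 := ne_of_gt hcpos
  set p : ℝ → ℝ := fun w => 1 + α + α^2*w - α^2*w^2 with hp
  set q : ℝ → ℝ := fun w => -(p w)^2 / c with hqdef
  -- derivative of p
  have hpw : ∀ w : ℝ, HasDerivAt p (α^2 - 2*α^2*w) w := by
    intro w
    have h1 : HasDerivAt (fun w : ℝ => 1 + α + α^2*w - α^2*w^2)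
        (α^2 * 1 - α^2 * (2 * w ^ 1)) w := by
      exact (((hasDerivAt_id w).const_mul (α^2)).const_add (1+α)).sub
        ((hasDerivAt_pow 2 w).const_mul (α^2))
    convert h1 using 1
    ring
  -- derivative of q
  have hqw : ∀ w : ℝ, HasDerivAt q (-(2 * p w * (α^2 - 2*α^2*w)) / c) w := by
    intro w
    have h1 : HasDerivAt (fun w => (p w)^2) ((2:ℕ) * (p w)^1 * (α^2 - 2*α^2*w)) w :=
      (hpw w).pow 2
    have h2 := (h1.neg).div_const c
    refine h2.congr_deriv ?_
    push_cast
    ring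
  have hderivq : deriv q = fun w => -(2 * p w * (α^2 - 2*α^2*w)) / c := by
    funext w; exact (hqw w).deriv
  -- second derivative of q at 1/2
  have hq2 : HasDerivAt (deriv q)
      (-(2 * ((α^2 - 2*α^2*(1/2:ℝ)) * (α^2 - 2*α^2*(1/2:ℝ)) + p (1/2) * (-(2*α^2)))) / c)
      (1/2 : ℝ) := by
    rw [hderivq]
    have hlin : HasDerivAt (fun w : ℝ => α^2 - 2*α^2*w) (-(2*α^2)) (1/2 : ℝ) := by
      have := ((hasDerivAt_id (1/2:ℝ)).const_mul (2*α^2)).const_sub (α^2)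
      refine this.congr_deriv ?_; ring
    have h1 : HasDerivAt (fun w => 2 * p w * (α^2 - 2*α^2*w))
        (2 * (α^2 - 2*α^2*(1/2:ℝ)) * (α^2 - 2*α^2*(1/2:ℝ)) + 2 * p (1/2) * (-(2*α^2)))
        (1/2 : ℝ) := ((hpw (1/2)).const_mul 2).mul hlin
    have h2 := (h1.neg).div_const c
    refine h2.congr_deriv ?_
    ring
  have hq2val : deriv (deriv q) (1/2 : ℝ) = 1 := by
    rw [hq2.deriv, hp, hc]
    field_simp
    ring
  -- g agrees with q near 1/2
  have hmem : Set.Ioo (-(1/α)) (1 + 1/α) ∈ nhds (1/2 : ℝ) := by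
    apply Ioo_mem_nhds
    · have : 0 < 1/α := by positivity
      linarith
    · have : 0 < 1/α := by positivity
      linarith
  have heq : g =ᶠ[nhds (1/2 : ℝ)] q := by
    refine Filter.eventuallyEq_of_mem hmem (fun w hw => ?_)
    obtain ⟨hw1, hw2⟩ := hw
    have ha : 0 < 1 + w*α := by
      have : -(1/α) * α < w * α := by
        exact mul_lt_mul_of_pos_right hw1 hα
      have h' : -(1/α) * α = -1 := by field_simp
      nlinarith
    have hb : 0 < 1 + (1-w)*α := by
      have : (1 - (1 + 1/α)) * α < (1 - w) * α := by
        apply mul_lt_mul_of_pos_right _ hα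
        linarith
      have h' : (1 - (1 + 1/α)) * α = -1 := by field_simp; ring
      nlinarith
    have hane : (1 + w*α) ≠ 0 := ne_of_gt ha
    have hbne : (1 + (1-w)*α) ≠ 0 := ne_of_gt hb
    have hfw : f w = α*(2+α) / ((1 + w*α) * (1 + (1-w)*α)) := by
      rw [hf, eq_div_iff (mul_ne_zero hane hbne), sub_mul, sub_mul, ← mul_assoc (w*α^2/(1+w*α)), div_mul_cancel₀ _ hane,
        mul_comm (1+w*α) (1+(1-w)*α), ← mul_assoc ((1-w)*α^2/(1+(1-w)*α)), div_mul_cancel₀ _ hbne]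
      ring
    have hfne : f w ≠ 0 := by
      rw [hfw]
      positivity
    rw [hg, hfw, hqdef, hp, hc]
    simp only
    rw [div_pow]
    field_simp
    ring
  have hkey : deriv (deriv g) (1/2 : ℝ) = 1 := by
    rw [heq.deriv.deriv_eq, hq2val]
  rw [hkey, show |(1/2:ℝ)| = 1/2 from abs_of_pos (by norm_num)]
  norm_num
end

section
/- For orthonormal v₁, v₂ ∈ ℝⁿ and α > 0, the function (w₁,w₂) ↦ Tr([α⁻¹I + w₁v₁v₁ᵀ + w₂v₂v₂ᵀ]⁻¹) restricted to the simplex {w₁+w₂=1, w₁,w₂ ≥ 0} attains its minimum uniquely at w₁ = w₂ = 1/2. -/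
open Matrix

private lemma vmv_mul {n : ℕ} (v w x y : Fin n → ℝ) :
    vecMulVec v w * vecMulVec x y = (∑ i, w i * x i) • vecMulVec v y := by
  ext i j
  simp [Matrix.mul_apply, vecMulVec_apply, Finset.sum_mul]
  exact Finset.sum_congr rfl fun k _ => by ring

private lemma vmv_trace {n : ℕ} (v : Fin n → ℝ) : (vecMulVec v v).trace = ∑ i, v i ^ 2 := by
  simp [Matrix.trace, Matrix.diag, vecMulVec_apply, sq]

private lemma inv_formula {n : ℕ} (α : ℝ) (hα : 0 < α) (v₁ v₂ : Fin n → ℝ)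
    (horth : ∑ i, v₁ i * v₂ i = 0)
    (hv₁ : ∑ i, v₁ i ^ 2 = 1) (hv₂ : ∑ i, v₂ i ^ 2 = 1)
    (w₁ w₂ : ℝ) (h1 : 0 ≤ w₁) (h2 : 0 ≤ w₂) :
    (α⁻¹ • (1 : Matrix (Fin n) (Fin n) ℝ)
        + w₁ • vecMulVec v₁ v₁ + w₂ • vecMulVec v₂ v₂)⁻¹
      = α • (1 : Matrix (Fin n) (Fin n) ℝ)
        + (-(α^2 * w₁) / (1 + α * w₁)) • vecMulVec v₁ v₁
        + (-(α^2 * w₂) / (1 + α * w₂)) • vecMulVec v₂ v₂ := by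
  have d1 : (0:ℝ) < 1 + α * w₁ := by nlinarith
  have d2 : (0:ℝ) < 1 + α * w₂ := by nlinarith
  apply Matrix.inv_eq_right_inv
  have h11 := vmv_mul v₁ v₁ v₁ v₁
  have h22 := vmv_mul v₂ v₂ v₂ v₂
  have h12 := vmv_mul v₁ v₁ v₂ v₂
  have h21 := vmv_mul v₂ v₂ v₁ v₁
  have horth' : ∑ i, v₂ i * v₁ i = 0 := by
    rw [← horth]; exact Finset.sum_congr rfl fun k _ => by ring
  have hsq1 : ∑ i, v₁ i * v₁ i = 1 := by
    rw [← hv₁]; exact Finset.sum_congr rfl fun k _ => by ring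
  have hsq2 : ∑ i, v₂ i * v₂ i = 1 := by
    rw [← hv₂]; exact Finset.sum_congr rfl fun k _ => by ring
  rw [hsq1] at h11; rw [hsq2] at h22; rw [horth] at h12; rw [horth'] at h21
  simp only [mul_add, add_mul, Matrix.smul_mul, Matrix.mul_smul, one_mul, mul_one,
    h11, h22, h12, h21, smul_smul, zero_smul, smul_zero, add_zero, one_smul]
  have e1 : α⁻¹ * (-(α^2 * w₁) / (1 + α * w₁)) + (w₁ * α + w₁ * (-(α^2 * w₁) / (1 + α * w₁))) = 0 := by
    field_simp; ring
  have e2 : α⁻¹ * (-(α^2 * w₂) / (1 + α * w₂)) + (w₂ * α + w₂ * (-(α^2 * w₂) / (1 + α * w₂))) = 0 := by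
    field_simp; ring
  rw [mul_inv_cancel₀ hα.ne', one_smul]
  have hc1 : (-(α ^ 2 * w₁) / (1 + α * w₁) * α⁻¹) + (-(α ^ 2 * w₁) / (1 + α * w₁) * w₁)
      = -(α * w₁) := by field_simp; ring
  have hc2 : (-(α ^ 2 * w₂) / (1 + α * w₂) * α⁻¹) + (-(α ^ 2 * w₂) / (1 + α * w₂) * w₂)
      = -(α * w₂) := by field_simp; ring
  simp only [← add_smul, hc1, hc2, neg_smul]
  abel

theorem model_problem_matrix_unique_min (n : ℕ) (α : ℝ) (hα : 0 < α)
    (v₁ v₂ : Fin n → ℝ)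
    (horth : ∑ i, v₁ i * v₂ i = 0)
    (hv₁ : ∑ i, v₁ i ^ 2 = 1) (hv₂ : ∑ i, v₂ i ^ 2 = 1) :
    ∀ w₁ w₂ : ℝ, 0 ≤ w₁ → 0 ≤ w₂ → w₁ + w₂ = 1 → (w₁, w₂) ≠ (1/2, 1/2) →
      (((α⁻¹ • (1 : Matrix (Fin n) (Fin n) ℝ)
          + (1/2 : ℝ) • vecMulVec v₁ v₁ + (1/2 : ℝ) • vecMulVec v₂ v₂))⁻¹).trace
        < (((α⁻¹ • (1 : Matrix (Fin n) (Fin n) ℝ)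
          + w₁ • vecMulVec v₁ v₁ + w₂ • vecMulVec v₂ v₂))⁻¹).trace := by
  intro w₁ w₂ h1 h2 hsum hne
  rw [inv_formula α hα v₁ v₂ horth hv₁ hv₂ w₁ w₂ h1 h2,
    inv_formula α hα v₁ v₂ horth hv₁ hv₂ (1/2) (1/2) (by norm_num) (by norm_num)]
  simp only [Matrix.trace_add, Matrix.trace_smul, Matrix.trace_one, vmv_trace, hv₁, hv₂,
    smul_eq_mul, mul_one]
  have hne1 : w₁ ≠ 1/2 := by
    intro h; apply hne
    have hw : w₂ = 1/2 := by linarith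
    rw [h, hw]
  have d1 : (0:ℝ) < 1 + α * w₁ := by nlinarith
  have d2 : (0:ℝ) < 1 + α * w₂ := by nlinarith
  have d3 : (0:ℝ) < 1 + α * (1/2) := by nlinarith
  have hkey : ((w₁ - w₂))^2 > 0 := by
    have : w₁ - w₂ ≠ 0 := by intro h; apply hne1; linarith
    positivity
  have main : -(α ^ 2 * (1 / 2)) / (1 + α * (1 / 2)) + -(α ^ 2 * (1 / 2)) / (1 + α * (1 / 2))
      < -(α ^ 2 * w₁) / (1 + α * w₁) + -(α ^ 2 * w₂) / (1 + α * w₂) := by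
    have hw2 : w₂ = 1 - w₁ := by linarith
    subst hw2
    rw [div_add_div _ _ d1.ne' d2.ne', div_add_div _ _ d3.ne' d3.ne',
      div_lt_div_iff₀ (by positivity) (by positivity)]
    nlinarith [mul_pos (mul_pos (mul_pos hα (mul_pos hα hα)) d3) hkey,
      mul_pos d1 d2, mul_pos (mul_pos hα hα) hkey]
  linarith
end
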